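/- The function f : ℝ × ℝ → ℝ defined by f(x,y) = e^y / x is strictly convex on the set {(x,y) : x > 0}. -/
import Mathlib

open Real

theorem stmt_1 :
    StrictConvexOn ℝ {p : ℝ × ℝ | 0 < p.1} (fun p : ℝ × ℝ => Real.exp p.2 / p.1) := by
  constructor
  · exact (convex_Ioi (0:ℝ)).linear_preimage (LinearMap.fst ℝ ℝ ℝ)
  · rintro ⟨x₁, y₁⟩ hp ⟨x₂, y₂⟩ hq hpq a b ha hb hab
    simp only [Set.mem_setOf_eq] at hp hq
    have hx : 0 < a * x₁ + b * x₂ := by positivity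
    have hkey : (fun p : ℝ × ℝ => Real.exp p.2 / p.1)
        (a • (x₁, y₁) + b • (x₂, y₂)) = Real.exp (a*y₁ + b*y₂) / (a*x₁ + b*x₂) := by
      simp [Prod.smul_mk, Prod.mk_add_mk]
    rw [hkey]
    simp only [smul_eq_mul]
    by_cases hxx : x₁ = x₂
    · subst hxx
      have hy : y₁ ≠ y₂ := fun h => hpq (by rw [h])
      have hexp := strictConvexOn_exp.2 (Set.mem_univ y₁) (Set.mem_univ y₂) hy ha hb hab
      simp only [smul_eq_mul] at hexp
      have hx1 : a * x₁ + b * x₁ = x₁ := by rw [← add_mul, hab, one_mul]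
      rw [hx1]
      calc Real.exp (a*y₁ + b*y₂) / x₁ < (a * Real.exp y₁ + b * Real.exp y₂) / x₁ := by
            gcongr
        _ = a * (Real.exp y₁ / x₁) + b * (Real.exp y₂ / x₁) := by ring
    · have hlog := strictConcaveOn_log_Ioi.2 (Set.mem_Ioi.2 hp) (Set.mem_Ioi.2 hq) hxx ha hb hab
      simp only [smul_eq_mul] at hlog
      have h1 : Real.exp (a*y₁ + b*y₂) / (a*x₁ + b*x₂)
          = Real.exp (a*y₁ + b*y₂ - Real.log (a*x₁ + b*x₂)) := by
        rw [Real.exp_sub, Real.exp_log hx]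
      have h2 : Real.exp (a*y₁ + b*y₂ - Real.log (a*x₁ + b*x₂))
          < Real.exp (a*(y₁ - Real.log x₁) + b*(y₂ - Real.log x₂)) := by
        apply Real.exp_lt_exp.2
        nlinarith [hlog]
      have h3 : Real.exp (a*(y₁ - Real.log x₁) + b*(y₂ - Real.log x₂))
          ≤ a * Real.exp (y₁ - Real.log x₁) + b * Real.exp (y₂ - Real.log x₂) := by
        have := convexOn_exp.2 (Set.mem_univ (y₁ - Real.log x₁))
          (Set.mem_univ (y₂ - Real.log x₂)) ha.le hb.le hab
        simpa using this
      have e1 : Real.exp (y₁ - Real.log x₁) = Real.exp y₁ / x₁ := by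
        rw [Real.exp_sub, Real.exp_log hp]
      have e2 : Real.exp (y₂ - Real.log x₂) = Real.exp y₂ / x₂ := by
        rw [Real.exp_sub, Real.exp_log hq]
      rw [h1]
      calc _ < _ := h2
        _ ≤ _ := h3
        _ = a * (Real.exp y₁ / x₁) + b * (Real.exp y₂ / x₂) := by rw [e1, e2]
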